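/- Let B be a finite two-sided skew brace. Then for every prime p dividing |B|, there exists a subbrace S of B with |S| = p (Cauchy's theorem for two-sided skew braces). -/

import Mathlib

class SkewBrace (B : Type*) extends Group B, AddGroup B where
  one_eq_zero : (1 : B) = 0
  left_compat : ∀ a b c : B, a * (b + c) = a * b - a + a * c

class TwoSidedSkewBrace (B : Type*) extends SkewBrace B where
  right_compat : ∀ a b c : B, (b + c) * a = b * a - a + c * a

section Basic
variable {B : Type*} [SkewBrace B]

lemma sb_mul_zero (a : B) : a * 0 = a := by
  rw [← SkewBrace.one_eq_zero, mul_one]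

lemma sb_mul_neg (a b : B) : a * (-b) = a + -(a * b) + a := by
  have h : a = a * b + -a + a * (-b) := by
    have h2 := SkewBrace.left_compat a b (-b)
    rw [add_neg_cancel, sb_mul_zero, sub_eq_add_neg] at h2
    exact h2
  calc a * (-b) = -(a * b + -a) + (a * b + -a + a * (-b)) := by
        rw [neg_add_cancel_left]
    _ = -(a * b + -a) + a := by rw [← h]
    _ = a + -(a * b) + a := by rw [neg_add_rev, neg_neg, add_assoc]

end Basic

section Aux
variable {B : Type*} [TwoSidedSkewBrace B]

/-- If `x * b = x + b` for all `b` in a set closed under the operations,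
then integer powers of `x` coincide with integer multiples. -/
lemma sb_zpow_eq_zsmul {S : Set B} (hmul : ∀ a ∈ S, ∀ b ∈ S, a * b ∈ S)
    (hinv : ∀ a ∈ S, a⁻¹ ∈ S) (x : B) (hxS : x ∈ S)
    (hx : ∀ b ∈ S, x * b = x + b) : ∀ n : ℤ, x ^ n = n • x ∧ x ^ n ∈ S := by
  have h1S : (1 : B) ∈ S := by
    have := hmul x hxS x⁻¹ (hinv x hxS)
    rwa [mul_inv_cancel] at this
  have hxinv : ∀ b ∈ S, x⁻¹ * b = -x + b := by
    intro b hb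
    have h := hx (x⁻¹ * b) (hmul _ (hinv x hxS) _ hb)
    rw [mul_inv_cancel_left] at h
    rw [← neg_add_cancel_left x (x⁻¹ * b), ← h]
  intro n
  induction n using Int.induction_on with
  | zero => refine ⟨by rw [zpow_zero, zero_zsmul, SkewBrace.one_eq_zero], by rwa [zpow_zero]⟩
  | succ k ih =>
    obtain ⟨ih1, ih2⟩ := ih
    have hpow : x ^ ((k : ℤ) + 1) = x * x ^ (k : ℤ) := by
      rw [show ((k : ℤ) + 1) = 1 + k by ring, zpow_add, zpow_one]
    constructor
    · rw [hpow, hx _ ih2, ih1, show ((k : ℤ) + 1) = 1 + k by ring, add_zsmul, one_zsmul]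
    · rw [hpow]; exact hmul x hxS _ ih2
  | pred k ih =>
    obtain ⟨ih1, ih2⟩ := ih
    have hpow : x ^ (-(k : ℤ) - 1) = x⁻¹ * x ^ (-(k : ℤ)) := by
      rw [show (-(k : ℤ) - 1) = -1 + -k by ring, zpow_add, zpow_neg_one]
    constructor
    · rw [hpow, hxinv _ ih2, ih1, show (-(k : ℤ) - 1) = -1 + -(k : ℤ) by ring, add_zsmul,
        show (-1 : ℤ) • x = -x by simp]
    · rw [hpow]; exact hmul x⁻¹ (hinv x hxS) _ ih2

end Aux

/-- Counting lemma: if `f^[p] = id` then the number of fixed points of `f`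
is congruent to `|α|` mod `p`. -/
lemma card_fixed_modEq {α : Type*} [Finite α] (p : ℕ) (hp : p.Prime) (f : α → α)
    (hf : f^[p] = id) : Nat.card α ≡ Nat.card {a : α // f a = a} [MOD p] := by
  haveI : Fact p.Prime := ⟨hp⟩
  haveI : NeZero p := ⟨hp.pos.ne'⟩
  have hiter : ∀ m : ℕ, f^[m % p] = f^[m] := by
    intro m
    conv_rhs => rw [← Nat.div_add_mod m p]
    rw [Function.iterate_add, Function.iterate_mul, hf, Function.iterate_id, Function.id_comp]
  letI : MulAction (Multiplicative (ZMod p)) α :=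
    { smul := fun g a => f^[(Multiplicative.toAdd g).val] a
      one_smul := fun a => by
        show f^[(Multiplicative.toAdd (1 : Multiplicative (ZMod p))).val] a = a
        simp [toAdd_one, ZMod.val_zero]
      mul_smul := fun g h a => by
        show f^[(Multiplicative.toAdd (g * h)).val] a
            = f^[(Multiplicative.toAdd g).val] (f^[(Multiplicative.toAdd h).val] a)
        rw [toAdd_mul, ZMod.val_add, hiter, Function.iterate_add_apply] }
  have hPG : IsPGroup p (Multiplicative (ZMod p)) := by
    apply IsPGroup.of_card (n := 1)
    rw [Nat.card_eq_fintype_card, pow_one]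
    simp [ZMod.card]
  have hmain := hPG.card_modEq_card_fixedPoints α
  have hcongr : Nat.card (MulAction.fixedPoints (Multiplicative (ZMod p)) α)
      = Nat.card {a : α // f a = a} := by
    apply Nat.card_congr
    apply Equiv.subtypeEquivRight
    intro a
    rw [MulAction.mem_fixedPoints]
    constructor
    · intro h
      have := h (Multiplicative.ofAdd (1 : ZMod p))
      rwa [show (Multiplicative.ofAdd (1 : ZMod p)) • a = f^[(1 : ZMod p).val] a from rfl,
        ZMod.val_one p, Function.iterate_one] at this
    · intro h g
      show f^[(Multiplicative.toAdd g).val] a = a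
      exact Function.iterate_fixed h _
  rw [← hcongr]
  exact hmain

lemma sb_aux {B : Type*} [TwoSidedSkewBrace B] [Fintype B] (p : ℕ) (hp : p.Prime) :
    ∀ n : ℕ, ∀ S : Set B, (0 : B) ∈ S →
      (∀ a ∈ S, ∀ b ∈ S, a + b ∈ S) → (∀ a ∈ S, -a ∈ S) →
      (∀ a ∈ S, ∀ b ∈ S, a * b ∈ S) → (∀ a ∈ S, a⁻¹ ∈ S) →
      Nat.card S = n → p ∣ n →
      ∃ (A : AddSubgroup B) (M : Subgroup B),
        (A : Set B) = (M : Set B) ∧ Nat.card A = p := by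
  intro n
  induction n using Nat.strong_induction_on with
  | _ n IH =>
  intro S h0S hadd hneg hmul hinv hcard hdvd
  haveI : Fact p.Prime := ⟨hp⟩
  -- the multiplicative group on S
  set MS : Subgroup B :=
    { carrier := S
      mul_mem' := fun {a b} ha hb => hmul a ha b hb
      one_mem' := by rw [SkewBrace.one_eq_zero]; exact h0S
      inv_mem' := fun {a} ha => hinv a ha } with hMS
  haveI : Finite ↥MS := Subtype.finite
  haveI := Fintype.ofFinite ↥MS
  have hcards : Fintype.card ↥MS = n := by
    rw [← Nat.card_eq_fintype_card, ← hcard]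
    rfl
  -- Cauchy in the multiplicative group
  obtain ⟨x0, hx0⟩ := exists_prime_orderOf_dvd_card p (by rw [hcards]; exact hdvd)
  set x : B := (x0 : B) with hxdef
  have hxS : x ∈ S := x0.2
  have hxord : orderOf x = p := by
    rw [← hx0]
    exact orderOf_injective MS.subtype Subtype.coe_injective x0
  have hxp : x ^ p = 1 := by rw [← hxord]; exact pow_orderOf_eq_one x
  -- the lambda map
  set f : B → B := fun b => -x + x * b with hfdef
  have hfS : ∀ b ∈ S, f b ∈ S := fun b hb => hadd _ (hneg x hxS) _ (hmul x hxS b hb)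
  have hfiter : ∀ (k : ℕ) (b : B), f^[k] b = -(x ^ k) + x ^ k * b := by
    intro k
    induction k with
    | zero => intro b; simp [SkewBrace.one_eq_zero]
    | succ k ihk =>
      intro b
      rw [Function.iterate_succ_apply', ihk]
      show -x + x * (-(x ^ k) + x ^ k * b) = -(x ^ (k + 1)) + x ^ (k + 1) * b
      rw [SkewBrace.left_compat, sb_mul_neg, ← mul_assoc, ← pow_succ', sub_eq_add_neg]
      simp only [add_assoc, neg_add_cancel_left, add_neg_cancel_left]
  -- restriction of f to S
  set g : ↥S → ↥S := fun a => ⟨f a.1, hfS a.1 a.2⟩ with hgdef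
  have hgiter : ∀ (k : ℕ) (a : ↥S), ((g^[k] a : ↥S) : B) = f^[k] (a : B) := by
    intro k
    induction k with
    | zero => intro a; rfl
    | succ k ihk =>
      intro a
      rw [Function.iterate_succ_apply', Function.iterate_succ_apply']
      show f ((g^[k] a : ↥S) : B) = f (f^[k] (a : B))
      rw [ihk]
  have hgp : g^[p] = id := by
    funext a
    apply Subtype.ext
    rw [hgiter p a, hfiter p, hxp, one_mul, SkewBrace.one_eq_zero, neg_zero, zero_add]
    rfl
  have hmod := card_fixed_modEq p hp g hgp
  -- the fixed set
  set F : Set B := {b : B | b ∈ S ∧ x * b = x + b} with hFdef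
  have hfixiff : ∀ b : B, (f b = b) ↔ x * b = x + b := by
    intro b
    constructor
    · intro h
      conv_rhs => rw [← h]
      show x * b = x + (-x + x * b)
      rw [add_neg_cancel_left]
    · intro h
      show -x + x * b = b
      rw [h, neg_add_cancel_left]
  have ecard : Nat.card {a : ↥S // g a = a} = Nat.card ↥F := by
    apply Nat.card_congr
    exact
      { toFun := fun a => ⟨a.1.1, a.1.2, (hfixiff _).1 (congrArg Subtype.val a.2)⟩
        invFun := fun b => ⟨⟨b.1, b.2.1⟩, Subtype.ext ((hfixiff _).2 b.2.2)⟩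
        left_inv := fun a => by ext; rfl
        right_inv := fun b => rfl }
  have hpF : p ∣ Nat.card ↥F := by
    have h1 : Nat.card ↥S ≡ Nat.card ↥F [MOD p] := ecard ▸ hmod
    exact Nat.modEq_zero_iff_dvd.mp
      (h1.symm.trans (Nat.modEq_zero_iff_dvd.mpr (hcard ▸ hdvd)))
  -- closure properties of F
  have hF0 : (0 : B) ∈ F := ⟨h0S, by rw [sb_mul_zero, add_zero]⟩
  have hFadd : ∀ a ∈ F, ∀ b ∈ F, a + b ∈ F := by
    intro a ha b hb
    refine ⟨hadd _ ha.1 _ hb.1, ?_⟩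
    rw [SkewBrace.left_compat, ha.2, hb.2, sub_eq_add_neg]
    simp only [add_assoc, neg_add_cancel_left]
  have hFneg : ∀ a ∈ F, -a ∈ F := by
    intro a ha
    refine ⟨hneg _ ha.1, ?_⟩
    rw [sb_mul_neg, ha.2, neg_add_rev]
    simp only [add_assoc, neg_add_cancel, add_zero]
  have hFmul : ∀ a ∈ F, ∀ b ∈ F, a * b ∈ F := by
    intro a ha b hb
    refine ⟨hmul _ ha.1 _ hb.1, ?_⟩
    have h1 : x * (a * b) = (x + a) * b := by rw [← ha.2, mul_assoc]
    rw [h1, TwoSidedSkewBrace.right_compat, hb.2, sub_eq_add_neg]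
    simp only [add_assoc, add_neg_cancel_left]
  have hFinv : ∀ a ∈ F, a⁻¹ ∈ F := by
    intro a ha
    refine ⟨hinv _ ha.1, ?_⟩
    have h1 : (x + a) * a⁻¹ = x := by rw [← ha.2, mul_assoc, mul_inv_cancel, mul_one]
    have h2 := TwoSidedSkewBrace.right_compat a⁻¹ x a
    rw [h1, mul_inv_cancel, SkewBrace.one_eq_zero, sub_eq_add_neg, add_zero] at h2
    conv_rhs => rw [h2]
    rw [add_assoc, neg_add_cancel, add_zero]
  by_cases hFS : F = S
  · -- x acts trivially: multiples of x form the subbrace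
    have hxall : ∀ b ∈ S, x * b = x + b := by
      intro b hb
      have hbF : b ∈ F := by rw [hFS]; exact hb
      exact hbF.2
    have hz := sb_zpow_eq_zsmul hmul hinv x hxS hxall
    have hsets : ((AddSubgroup.zmultiples x : AddSubgroup B) : Set B)
        = ((Subgroup.zpowers x : Subgroup B) : Set B) := by
      ext b
      simp only [SetLike.mem_coe, AddSubgroup.mem_zmultiples_iff, Subgroup.mem_zpowers_iff]
      constructor
      · rintro ⟨k, rfl⟩; exact ⟨k, (hz k).1⟩
      · rintro ⟨k, rfl⟩; exact ⟨k, ((hz k).1).symm⟩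
    refine ⟨AddSubgroup.zmultiples x, Subgroup.zpowers x, hsets, ?_⟩
    have hc : Nat.card (AddSubgroup.zmultiples x) = Nat.card (Subgroup.zpowers x) :=
      Nat.card_congr (Equiv.setCongr hsets)
    rw [hc, Nat.card_zpowers, hxord]
  · -- recurse into the strictly smaller subbrace F
    have hFsub : F ⊆ S := fun b hb => hb.1
    have hlt : Nat.card ↥F < n := by
      rw [← hcard, Nat.card_coe_set_eq, Nat.card_coe_set_eq]
      exact Set.ncard_lt_ncard (ssubset_of_subset_of_ne hFsub hFS) (Set.toFinite S)
    exact IH (Nat.card ↥F) hlt F hF0 hFadd hFneg hFmul hFinv rfl hpF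

theorem twoSided_cauchy {B : Type*} [TwoSidedSkewBrace B] [Fintype B] :
    ∀ p : ℕ, p.Prime → p ∣ Nat.card B →
      ∃ (A : AddSubgroup B) (M : Subgroup B),
        (A : Set B) = (M : Set B) ∧ Nat.card A = p := by
  intro p hp hdvd
  refine sb_aux p hp (Nat.card B) Set.univ (Set.mem_univ 0)
    (fun a _ b _ => Set.mem_univ _) (fun a _ => Set.mem_univ _)
    (fun a _ b _ => Set.mem_univ _) (fun a _ => Set.mem_univ _) ?_ hdvd
  rw [Nat.card_coe_set_eq, Set.ncard_univ]
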